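/- Let (M, J, g) be a metallic pseudo-Riemannian manifold with twin metric G, ∇ a linear connection and ∇† the G-conjugate connection. If both (∇, J) and (∇, G) are Codazzi-coupled, then for all X, Y, Z: G((∇†_X J)Y − (∇†_Y J)X, Z) = G(Y, (∇_Z J)X − (∇†_Z J)X). -/
import Mathlib


variable {A : Type*} [CommRing A] [Algebra ℝ A]
variable {V : Type*} [AddCommGroup V] [Module ℝ V] [Module A V] [IsScalarTower ℝ A V]

/-- Covariant derivative `(D_X T) Y` of a (1,1)-tensor field `T`. -/
def covT (D : V → V → V) (T : V → V) (X Y : V) : V := D X (T Y) - T (D X Y)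

/-- `covM Dact D h X Y Z = (D_Z h)(X,Y)`, the covariant derivative of a
(0,2)-tensor field `h`, where `Dact` is the action of vector fields on functions. -/
def covM (Dact : V → A → A) (D : V → V → V) (h : V → V → A) (X Y Z : V) : A :=
  Dact Z (h X Y) - h (D Z X) Y - h X (D Z Y)

/-- if (∇,J) and (∇,G) are Codazzi-coupled, then
G((∇†_X J)Y − (∇†_Y J)X, Z) = G(Y, (∇_Z J)X − (∇†_Z J)X). -/
theorem codazzi_G_conjugate_identity
    (Dact : V → A → A) (D Dd : V → V → V)
    (g : V →ₗ[A] V →ₗ[A] A) (J : V →ₗ[A] V) (p q : ℝ)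
    (hsym : ∀ X Y, g X Y = g Y X)
    (hJsym : ∀ X Y, g (J X) Y = g X (J Y))
    (hJ2 : ∀ X, J (J X) = p • J X + q • X)
    (hGnd : ∀ X, (∀ Y, g (J X) Y = 0) → X = 0)
    -- Dd is the G-conjugate of D, where G(X,Y) = g(JX,Y)
    (hDd : ∀ X Y Z, Dact Z (g (J X) Y) = g (J (D Z X)) Y + g (J X) (Dd Z Y))
    -- (∇,J) Codazzi-coupled
    (hCodJ : ∀ X Y, covT D (⇑J) X Y = covT D (⇑J) Y X)
    -- (∇,G) Codazzi-coupled: (∇_X G)(Y,Z) = (∇_Z G)(X,Y)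
    (hCodG : ∀ X Y Z, covM Dact D (fun a b => g (J a) b) Y Z X
      = covM Dact D (fun a b => g (J a) b) X Y Z) :
    ∀ X Y Z, g (J (covT Dd (⇑J) X Y - covT Dd (⇑J) Y X)) Z
      = g (J Y) (covT D (⇑J) Z X - covT Dd (⇑J) Z X) := by

  have Gsym : ∀ a b : V, g (J a) b = g (J b) a := by
    intro a b; rw [hJsym, hsym]
  have L : ∀ X Y Z : V, g (J (covT Dd (⇑J) X Y)) Z = g (J (covT D (⇑J) X Z)) Y := by
    intro X Y Z
    have h1 : g (J (Dd X (J Y))) Z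
        = Dact X (g (J Z) (J Y)) - g (J (D X Z)) (J Y) := by
      rw [Gsym]; linear_combination - hDd Z (J Y) X
    have h2 : g (J (J (Dd X Y))) Z
        = Dact X (g (J (J Z)) Y) - g (J (D X (J Z))) Y := by
      rw [hJsym (J (Dd X Y)) Z, Gsym (Dd X Y) (J Z)]
      linear_combination - hDd (J Z) Y X
    simp only [covT, map_sub, LinearMap.sub_apply]
    rw [h1, h2, hJsym (J Z) Y, hJsym (J (D X Z)) Y]
    ring
  intro X Y Z
  simp only [map_sub, LinearMap.sub_apply]
  rw [L X Y Z, L Y X Z, hCodJ X Z, hCodJ Y Z,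
    Gsym Y (covT D (⇑J) Z X), Gsym Y (covT Dd (⇑J) Z X), L Z X Y]
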